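/- Let (X₁,…,X_d) be an exchangeable sequence of random variables with values in a finite set 𝒳, let p be the distribution of (X₁,…,X_k) for k ≤ d, and let q(x₁,…,x_k) = ∑_{s ∈ 𝒳^d} p̃(s) ∏_{i=1}^k p̂_s(x_i), where p̃ is the distribution of (X₁,…,X_d) and p̂_s is the empirical distribution of s ∈ 𝒳^d. Then D(p‖q) ≤ log₂(d^k / d^{\underline{k}}). -/

import Mathlib

/-- Empirical distribution of a sequence `s ∈ 𝒳^d`: `p̂_s(c) = (1/d)∑_i 1{s_i = c}`. -/
noncomputable def empDist {𝒳 : Type*} [DecidableEq 𝒳] {d : ℕ} (s : Fin d → 𝒳) (c : 𝒳) : ℝ :=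
  (1 / d) * ∑ i, if s i = c then 1 else 0

/-- Every embedding `Fin k ↪ Fin d` extends to a permutation of `Fin d`. -/
lemma exists_perm_ext' {k d : ℕ} (hkd : k ≤ d) (φ : Fin k ↪ Fin d) :
    ∃ σ : Equiv.Perm (Fin d), ∀ i, σ (Fin.castLE hkd i) = φ i := by
  classical
  set ι : Fin k ↪ Fin d := Fin.castLEEmb hkd with hι
  let e : {x // x ∈ Set.range ι} ≃ {x // x ∈ Set.range φ} :=
    ι.toEquivRange.symm.trans φ.toEquivRange
  refine ⟨e.extendSubtype, fun i => ?_⟩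
  have hmem : Fin.castLE hkd i ∈ Set.range ι := ⟨i, rfl⟩
  rw [e.extendSubtype_apply_of_mem _ hmem]
  have : (⟨Fin.castLE hkd i, hmem⟩ : {x // x ∈ Set.range ι}) = ⟨ι i, Set.mem_range_self i⟩ := rfl
  rw [this]
  simp [e, Function.Embedding.toEquivRange_symm_apply_self,
    Function.Embedding.toEquivRange_apply]

/-- Extended-urn bound: if `(X₁,…,X_d)` is exchangeable with distribution `p̃` on `𝒳^d`,
`p` is the distribution of the first `k` coordinates, and
`q(x) = ∑_s p̃(s) ∏_{i=1}^k p̂_s(x_i)`, then `D(p‖q) ≤ log₂(d^k / d^{\underline{k}})`. -/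
theorem stmt12 {𝒳 : Type*} [Fintype 𝒳] [DecidableEq 𝒳] (d k : ℕ) (hk : 0 < k)
    (hkd : k ≤ d)
    (ptilde : (Fin d → 𝒳) → ℝ)
    (hp0 : ∀ s, 0 ≤ ptilde s) (hp1 : ∑ s, ptilde s = 1)
    (hexch : ∀ (σ : Equiv.Perm (Fin d)) (s : Fin d → 𝒳), ptilde (s ∘ σ) = ptilde s)
    (p : (Fin k → 𝒳) → ℝ)
    (hp : ∀ x, p x = ∑ s, if (∀ i : Fin k, s (Fin.castLE hkd i) = x i) then ptilde s else 0)
    (q : (Fin k → 𝒳) → ℝ)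
    (hq : ∀ x, q x = ∑ s, ptilde s * ∏ i : Fin k, empDist s (x i)) :
    ∑ x, p x * Real.logb 2 (p x / q x) ≤
      Real.logb 2 ((d : ℝ) ^ k / (d.descFactorial k : ℝ)) := by
  classical
  have hd : 0 < d := lt_of_lt_of_le hk hkd
  have hdR : (0:ℝ) < d := by exact_mod_cast hd
  have hdf : 0 < d.descFactorial k := Nat.pos_of_ne_zero fun h =>
    absurd (Nat.descFactorial_eq_zero_iff_lt.mp h) (not_lt.mpr hkd)
  have hdfR : (0:ℝ) < (d.descFactorial k : ℝ) := by exact_mod_cast hdf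
  set C : ℝ := (d : ℝ) ^ k / (d.descFactorial k : ℝ) with hC
  have hC1 : 1 ≤ C := by
    rw [hC, le_div_iff₀ hdfR, one_mul]
    exact_mod_cast Nat.descFactorial_le_pow d k
  have hCpos : 0 < C := lt_of_lt_of_le one_pos hC1
  -- N and M counts
  set N : (Fin d → 𝒳) → (Fin k → 𝒳) → ℝ := fun s x =>
    ∑ φ : Fin k ↪ Fin d, (if ∀ i, s (φ i) = x i then (1:ℝ) else 0) with hN
  set M : (Fin d → 𝒳) → (Fin k → 𝒳) → ℝ := fun s x =>
    ∑ g : Fin k → Fin d, (if ∀ i, s (g i) = x i then (1:ℝ) else 0) with hM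
  -- per-embedding lemma
  have hperφ : ∀ (x : Fin k → 𝒳) (φ : Fin k ↪ Fin d),
      (∑ s, if (∀ i : Fin k, s (φ i) = x i) then ptilde s else 0) = p x := by
    intro x φ
    obtain ⟨σ, hσ⟩ := exists_perm_ext' hkd φ
    rw [hp]
    have hbij : Function.Bijective (fun s : Fin d → 𝒳 => s ∘ ⇑σ) := by
      apply Function.bijective_iff_has_inverse.mpr
      exact ⟨fun s => s ∘ ⇑σ.symm,
        fun s => by funext j; simp,
        fun s => by funext j; simp⟩
    refine Fintype.sum_bijective _ hbij _ _ (fun s => ?_)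
    rw [hexch σ s]
    refine if_congr ?_ rfl rfl
    constructor
    · intro h i; simpa [Function.comp, hσ i] using h i
    · intro h i; simpa [Function.comp, hσ i] using h i
  -- key identity
  have hkey : ∀ x, (d.descFactorial k : ℝ) * p x = ∑ s, ptilde s * N s x := by
    intro x
    have hcard : Fintype.card (Fin k ↪ Fin d) = d.descFactorial k := by
      simp [Fintype.card_embedding_eq]
    calc (d.descFactorial k : ℝ) * p x
        = ∑ _φ : Fin k ↪ Fin d, p x := by
          rw [Finset.sum_const, Finset.card_univ, hcard, nsmul_eq_mul]
      _ = ∑ φ : Fin k ↪ Fin d, ∑ s,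
            (if (∀ i : Fin k, s (φ i) = x i) then ptilde s else 0) := by
          exact Finset.sum_congr rfl fun φ _ => (hperφ x φ).symm
      _ = ∑ s, ∑ φ : Fin k ↪ Fin d,
            (if (∀ i : Fin k, s (φ i) = x i) then ptilde s else 0) := Finset.sum_comm
      _ = ∑ s, ptilde s * N s x := by
          refine Finset.sum_congr rfl fun s _ => ?_
          rw [hN, Finset.mul_sum]
          refine Finset.sum_congr rfl fun φ _ => ?_
          split <;> ring
  -- product of empirical dists
  have hprod : ∀ (s : Fin d → 𝒳) (x : Fin k → 𝒳),
      ∏ i, empDist s (x i) = (1/(d:ℝ))^k * M s x := by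
    intro s x
    unfold empDist
    rw [Finset.prod_mul_distrib, Finset.prod_const, Finset.card_univ, Fintype.card_fin]
    congr 1
    rw [Finset.prod_univ_sum]
    rw [Fintype.piFinset_univ]
    refine Finset.sum_congr rfl fun g _ => ?_
    rw [Finset.prod_boole]
    simp
  -- N ≤ M
  have hNM : ∀ s x, N s x ≤ M s x := by
    intro s x
    show (∑ φ : Fin k ↪ Fin d, (if ∀ i, s (φ i) = x i then (1:ℝ) else 0))
        ≤ ∑ g : Fin k → Fin d, (if ∀ i, s (g i) = x i then (1:ℝ) else 0)
    have himg : (∑ φ : Fin k ↪ Fin d, (if ∀ i, s (φ i) = x i then (1:ℝ) else 0))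
        = ∑ g ∈ Finset.univ.image (fun φ : Fin k ↪ Fin d => (φ : Fin k → Fin d)),
            (if ∀ i, s (g i) = x i then (1:ℝ) else 0) := by
      rw [Finset.sum_image]
      intro a _ b _ h
      exact DFunLike.coe_injective h
    rw [himg]
    refine Finset.sum_le_sum_of_subset_of_nonneg (Finset.subset_univ _) ?_
    intro g _ _
    split <;> norm_num
  -- pointwise bound p ≤ C q
  have hpq : ∀ x, p x ≤ C * q x := by
    intro x
    have h1 : p x = (∑ s, ptilde s * N s x) / (d.descFactorial k : ℝ) := by
      rw [← hkey x]; field_simp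
    have h2 : C * q x = (∑ s, ptilde s * M s x) / (d.descFactorial k : ℝ) := by
      rw [hq, hC]
      rw [Finset.mul_sum, Finset.sum_div]
      refine Finset.sum_congr rfl fun s _ => ?_
      rw [hprod]
      have hone : ((d:ℝ))^k * (1/(d:ℝ))^k = 1 := by
        rw [← mul_pow]; field_simp; exact one_pow k
      field_simp
      linear_combination (ptilde s * M s x) * hone
    rw [h1, h2]
    gcongr with s hs
    · exact hp0 s
    · exact hNM s x
  -- nonnegativity of p and q
  have hp0' : ∀ x, 0 ≤ p x := by
    intro x
    rw [hp]
    refine Finset.sum_nonneg fun s _ => ?_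
    split
    · exact hp0 s
    · exact le_refl 0
  have hq0' : ∀ x, 0 ≤ q x := by
    intro x
    rw [hq]
    refine Finset.sum_nonneg fun s _ => ?_
    refine mul_nonneg (hp0 s) (Finset.prod_nonneg fun i _ => ?_)
    unfold empDist
    refine mul_nonneg (by positivity) (Finset.sum_nonneg fun j _ => ?_)
    split <;> norm_num
  -- sum of p is 1
  have hsum1 : ∑ x, p x = 1 := by
    simp_rw [hp]
    rw [Finset.sum_comm, ← hp1]
    refine Finset.sum_congr rfl fun s _ => ?_
    calc ∑ x : Fin k → 𝒳, (if (∀ i : Fin k, s (Fin.castLE hkd i) = x i) then ptilde s else 0)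
        = ∑ x : Fin k → 𝒳, (if (fun i => s (Fin.castLE hkd i)) = x then ptilde s else 0) := by
          refine Finset.sum_congr rfl fun x _ => ?_
          exact if_congr funext_iff.symm rfl rfl
      _ = ptilde s := by rw [Finset.sum_ite_eq]; simp
  -- conclude
  have hterm : ∀ x, p x * Real.logb 2 (p x / q x) ≤ p x * Real.logb 2 C := by
    intro x
    rcases eq_or_lt_of_le (hp0' x) with h0 | hpos
    · rw [← h0]; simp
    · have hqpos : 0 < q x := by
        rcases eq_or_lt_of_le (hq0' x) with h0' | h; swap
        · exact h
        · exfalso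
          have := hpq x
          rw [← h0', mul_zero] at this
          exact absurd (lt_of_lt_of_le hpos this) (lt_irrefl 0)
      have hratio : p x / q x ≤ C := (div_le_iff₀ hqpos).mpr (by linarith [hpq x])
      have hratpos : 0 < p x / q x := div_pos hpos hqpos
      refine mul_le_mul_of_nonneg_left ?_ (le_of_lt hpos)
      exact Real.logb_le_logb_of_le one_lt_two hratpos hratio
  calc ∑ x, p x * Real.logb 2 (p x / q x)
      ≤ ∑ x, p x * Real.logb 2 C := Finset.sum_le_sum fun x _ => hterm x
    _ = (∑ x, p x) * Real.logb 2 C := by rw [Finset.sum_mul]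
    _ = Real.logb 2 C := by rw [hsum1, one_mul]
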